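/- In the subKautz digraph sK(d,2) with d ≥ 3, the numbers of vertices at distance 0, 1, 2, 3, 4 from any fixed vertex are respectively 1, d−1, (d−1)², 2(d−1), 1, and these sum to d² + d, the total number of vertices; in particular sK(d,2) has diameter 4 and every vertex has a unique vertex at maximum distance. -/

import Mathlib

/-- Vertex of `sK(d,2)`: an ordered pair `x₁x₂` with `x₁ ≠ x₂`. -/
abbrev sk2Vert {n : ℕ} (x : Fin 2 → Fin n) : Prop := x 0 ≠ x 1

/-- Arc of `sK(d,2)`: `x₁x₂ → x₂x₃` with `x₃ ∉ {x₁, x₂}`. -/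
abbrev sk2Adj {n : ℕ} (x y : Fin 2 → Fin n) : Prop :=
  y 0 = x 1 ∧ y 1 ≠ x 0 ∧ y 1 ≠ x 1

/-- A walk of length `k` in `sK(d,2)` from `u` to `v`. -/
abbrev sk2Walk {n : ℕ} (k : ℕ) (u v : Fin 2 → Fin n) : Prop :=
  ∃ w : Fin (k + 1) → Fin 2 → Fin n, w 0 = u ∧ w (Fin.last k) = v ∧
    (∀ i, sk2Vert (w i)) ∧ ∀ i j : Fin (k + 1), j.val = i.val + 1 → sk2Adj (w i) (w j)

/-- `v` is at distance exactly `m` from `u` in `sK(d,2)`. -/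
abbrev sk2DistEq {n : ℕ} (u v : Fin 2 → Fin n) (m : ℕ) : Prop :=
  sk2Walk m u v ∧ ∀ k < m, ¬ sk2Walk k u v

open Finset

lemma ncard_setOf {α : Type*} [Fintype α] [DecidableEq α] (P : α → Prop) [DecidablePred P] :
    {x | P x}.ncard = (univ.filter P).card := by
  rw [← Set.ncard_coe_finset]
  congr 1
  ext x
  simp


lemma fin2_eta {n : ℕ} (v : Fin 2 → Fin n) : ![v 0, v 1] = v := by
  funext i; fin_cases i <;> rfl

lemma exists_notin {n : ℕ} (h : 4 ≤ n) (a b c : Fin n) :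
    ∃ x : Fin n, x ≠ a ∧ x ≠ b ∧ x ≠ c := by
  by_contra hc
  push_neg at hc
  have hsub : (Finset.univ : Finset (Fin n)) ⊆ {a, b, c} := by
    intro x _
    simp only [Finset.mem_insert, Finset.mem_singleton]
    by_contra hx
    push_neg at hx
    exact hx.2.2 (hc x hx.1 hx.2.1)
  have := Finset.card_le_card hsub
  simp only [Finset.card_univ, Fintype.card_fin] at this
  have h3 : ({a, b, c} : Finset (Fin n)).card ≤ 3 := by
    apply le_trans (Finset.card_insert_le _ _)
    have h2 := Finset.card_insert_le b {c}
    simp only [Finset.card_singleton] at h2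
    omega
  omega

lemma two_compl_card {d : ℕ} (a b : Fin (d + 1)) (hab : a ≠ b) :
    (Finset.univ.filter (fun x : Fin (d + 1) => x ≠ a ∧ x ≠ b)).card = d - 1 := by
  have h : Finset.univ.filter (fun x : Fin (d + 1) => x ≠ a ∧ x ≠ b)
      = Finset.univ \ {a, b} := by
    ext x; simp [not_or]
  rw [h, Finset.card_sdiff_of_subset (by simp)]
  rw [Finset.card_insert_of_notMem (by simpa using hab), Finset.card_singleton]
  simp

section Walks
variable {n : ℕ} {u v : Fin 2 → Fin n}

lemma walk0_prop (h : sk2Walk 0 u v) : v = u := by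
  obtain ⟨w, h0, hl, -, -⟩ := h
  rw [← h0, ← hl]; rfl

lemma walk1_prop (h : sk2Walk 1 u v) : v 0 = u 1 ∧ v 1 ≠ u 0 ∧ v 1 ≠ u 1 := by
  obtain ⟨w, h0, hl, -, hadj⟩ := h
  have h01 := hadj 0 1 rfl
  rw [h0] at h01
  rw [show (Fin.last 1) = 1 from rfl] at hl
  rw [hl] at h01
  exact h01

lemma walk2_prop (h : sk2Walk 2 u v) : v 0 ≠ u 0 ∧ v 0 ≠ u 1 ∧ v 1 ≠ u 1 := by
  obtain ⟨w, h0, hl, -, hadj⟩ := h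
  have h01 := hadj 0 1 rfl
  have h12 := hadj 1 2 rfl
  rw [h0] at h01
  rw [show (Fin.last 2) = 2 from rfl] at hl
  rw [hl] at h12
  refine ⟨?_, ?_, ?_⟩
  · rw [h12.1]; exact h01.2.1
  · rw [h12.1]; exact h01.2.2
  · rw [← h01.1]; exact h12.2.1

lemma walk3_prop (h : sk2Walk 3 u v) : v 0 ≠ u 1 := by
  obtain ⟨w, h0, hl, -, hadj⟩ := h
  have h01 := hadj 0 1 rfl
  have h12 := hadj 1 2 rfl
  have h23 := hadj 2 3 rfl
  rw [h0] at h01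
  rw [show (Fin.last 3) = 3 from rfl] at hl
  rw [hl] at h23
  rw [h23.1, ← h01.1]
  exact h12.2.1

variable {n : ℕ} {u v : Fin 2 → Fin n}

lemma mkwalk0 (hu : sk2Vert u) : sk2Walk 0 u u := by
  refine ⟨fun _ => u, rfl, rfl, fun _ => hu, fun i j hij => ?_⟩
  omega

lemma mkwalk1 (hu : sk2Vert u) (h1 : v 0 = u 1) (h2 : v 1 ≠ u 0) (h3 : v 1 ≠ u 1) :
    sk2Walk 1 u v := by
  have hv : sk2Vert v := by show v 0 ≠ v 1; rw [h1]; exact fun h => h3 h.symm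
  refine ⟨![u, v], rfl, rfl, ?_, ?_⟩
  · intro i; fin_cases i <;> simpa
  · intro i j hij
    fin_cases i <;> fin_cases j <;> simp_all <;> exact ⟨h1, h2, h3⟩

lemma mkwalk2 (hu : sk2Vert u) (h1 : v 0 ≠ u 0) (h2 : v 0 ≠ u 1) (h3 : v 1 ≠ u 1)
    (h4 : v 0 ≠ v 1) : sk2Walk 2 u v := by
  refine ⟨![u, ![u 1, v 0], v], rfl, rfl, ?_, ?_⟩
  · intro i; fin_cases i <;> simp_all [sk2Vert]
    exact fun h => h2 h.symm
  · intro i j hij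
    fin_cases i <;> fin_cases j <;> simp_all [sk2Adj]
    exact fun h => h4 h.symm

variable {n : ℕ} {u v : Fin 2 → Fin n}

lemma mkwalk3a (hn : 4 ≤ n) (hu : sk2Vert u) (h1 : v 0 = u 0) (h2 : v 1 ≠ u 0)
    (h3 : v 1 ≠ u 1) : sk2Walk 3 u v := by
  obtain ⟨c, hca, hcb, hcv⟩ := exists_notin hn (u 0) (u 1) (v 1)
  refine ⟨![u, ![u 1, c], ![c, u 0], v], rfl, rfl, ?_, ?_⟩

  · intro i
    fin_cases i <;> simp_all [sk2Vert, eq_comm]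
  · intro i j hij
    fin_cases i <;> fin_cases j <;> simp_all [sk2Adj, eq_comm]

lemma mkwalk3b (hn : 4 ≤ n) (hu : sk2Vert u) (h1 : v 1 = u 1) (h2 : v 0 ≠ u 0)
    (h3 : v 0 ≠ u 1) : sk2Walk 3 u v := by
  obtain ⟨x, hxa, hxb, hxv⟩ := exists_notin hn (u 0) (u 1) (v 0)
  refine ⟨![u, ![u 1, x], ![x, v 0], v], rfl, rfl, ?_, ?_⟩

  · intro i
    fin_cases i <;> simp_all [sk2Vert, eq_comm]
  · intro i j hij
    fin_cases i <;> fin_cases j <;> simp_all [sk2Adj, eq_comm]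

lemma mkwalk4 (hn : 4 ≤ n) (hu : sk2Vert u) : sk2Walk 4 u ![u 1, u 0] := by
  obtain ⟨c, hca, hcb, -⟩ := exists_notin hn (u 0) (u 1) (u 1)
  obtain ⟨e, hea, heb, hec⟩ := exists_notin hn (u 0) (u 1) c
  refine ⟨![u, ![u 1, c], ![c, e], ![e, u 1], ![u 1, u 0]], rfl, rfl, ?_, ?_⟩

  · intro i
    fin_cases i <;> simp_all [sk2Vert, eq_comm]
  · intro i j hij
    fin_cases i <;> fin_cases j <;> simp_all [sk2Adj, eq_comm]

end Walks

lemma card_fun_pair {n : ℕ} (Q : Fin n → Fin n → Prop) [DecidablePred fun p : Fin n × Fin n => Q p.1 p.2]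
    [DecidablePred fun v : Fin 2 → Fin n => Q (v 0) (v 1)] :
    (univ.filter (fun v : Fin 2 → Fin n => Q (v 0) (v 1))).card
      = ((univ : Finset (Fin n × Fin n)).filter (fun p => Q p.1 p.2)).card := by
  apply Finset.card_nbij' (i := fun v => (v 0, v 1)) (j := fun p => ![p.1, p.2])
  · intro v hv; simpa using (by simpa using hv : Q (v 0) (v 1))
  · intro p hp; simpa using (by simpa using hp : Q p.1 p.2)
  · intro v _; exact fin2_eta v
  · intro p _; rfl

lemma card_pair_sum {n : ℕ} (Q : Fin n → Fin n → Prop)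
    [DecidablePred fun p : Fin n × Fin n => Q p.1 p.2] [∀ x, DecidablePred (Q x)] :
    ((univ : Finset (Fin n × Fin n)).filter (fun p => Q p.1 p.2)).card
      = ∑ x : Fin n, (univ.filter (Q x)).card := by
  rw [Finset.card_filter, ← Finset.univ_product_univ, Finset.sum_product]
  refine Finset.sum_congr rfl fun x _ => ?_
  rw [Finset.card_filter]

variable {d : ℕ}

lemma countS1 (a b : Fin (d + 1)) (hab : a ≠ b) :
    (univ.filter (fun v : Fin 2 → Fin (d + 1) => v 0 = b ∧ v 1 ≠ a ∧ v 1 ≠ b)).card = d - 1 := by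
  rw [card_fun_pair (fun x y => x = b ∧ y ≠ a ∧ y ≠ b),
    card_pair_sum (fun x y => x = b ∧ y ≠ a ∧ y ≠ b)]
  rw [Finset.sum_eq_single b]
  · simpa using two_compl_card a b hab
  · intro x _ hx
    rw [Finset.card_eq_zero, Finset.filter_eq_empty_iff]
    exact fun y _ h => hx h.1
  · simp

lemma countS2 (a b : Fin (d + 1)) (hab : a ≠ b) :
    (univ.filter (fun v : Fin 2 → Fin (d + 1) =>
      v 0 ≠ a ∧ v 0 ≠ b ∧ v 1 ≠ b ∧ v 0 ≠ v 1)).card = (d - 1) ^ 2 := by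
  rw [card_fun_pair (fun x y => x ≠ a ∧ x ≠ b ∧ y ≠ b ∧ x ≠ y),
    card_pair_sum (fun x y => x ≠ a ∧ x ≠ b ∧ y ≠ b ∧ x ≠ y)]
  have hsum : ∀ x : Fin (d + 1),
      (univ.filter fun y => x ≠ a ∧ x ≠ b ∧ y ≠ b ∧ x ≠ y).card
        = if x ≠ a ∧ x ≠ b then d - 1 else 0 := by
    intro x
    split_ifs with hx
    · have : (univ.filter fun y : Fin (d+1) => x ≠ a ∧ x ≠ b ∧ y ≠ b ∧ x ≠ y)
          = univ.filter fun y => y ≠ b ∧ y ≠ x := by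
        ext y; simp only [mem_filter, mem_univ, true_and]
        constructor
        · rintro ⟨-, -, h1, h2⟩; exact ⟨h1, fun h => h2 h.symm⟩
        · rintro ⟨h1, h2⟩; exact ⟨hx.1, hx.2, h1, fun h => h2 h.symm⟩
      rw [this, two_compl_card b x (fun h => hx.2 h.symm)]
    · rw [Finset.card_eq_zero, Finset.filter_eq_empty_iff]
      intro y _ h
      exact hx ⟨h.1, h.2.1⟩
  rw [Finset.sum_congr rfl fun x _ => hsum x, Finset.sum_ite, Finset.sum_const,
    Finset.sum_const_zero, add_zero, smul_eq_mul, two_compl_card a b hab, sq]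

lemma countS3 (a b : Fin (d + 1)) (hab : a ≠ b) :
    (univ.filter (fun v : Fin 2 → Fin (d + 1) =>
      (v 0 = a ∧ v 1 ≠ a ∧ v 1 ≠ b) ∨ (v 1 = b ∧ v 0 ≠ a ∧ v 0 ≠ b))).card = 2 * (d - 1) := by
  rw [card_fun_pair (fun x y => (x = a ∧ y ≠ a ∧ y ≠ b) ∨ (y = b ∧ x ≠ a ∧ x ≠ b)),
    card_pair_sum (fun x y => (x = a ∧ y ≠ a ∧ y ≠ b) ∨ (y = b ∧ x ≠ a ∧ x ≠ b))]
  have hsum : ∀ x : Fin (d + 1),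
      (univ.filter fun y => (x = a ∧ y ≠ a ∧ y ≠ b) ∨ (y = b ∧ x ≠ a ∧ x ≠ b)).card
        = if x = a then d - 1 else if x ≠ b then 1 else 0 := by
    intro x
    split_ifs with hx1 hx2
    · have : (univ.filter fun y : Fin (d+1) => (x = a ∧ y ≠ a ∧ y ≠ b) ∨ (y = b ∧ x ≠ a ∧ x ≠ b))
          = univ.filter fun y => y ≠ a ∧ y ≠ b := by
        ext y; simp only [mem_filter, mem_univ, true_and]
        constructor
        · rintro (⟨-, h⟩ | ⟨-, h, -⟩); exact h; exact absurd hx1 h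
        · intro h; exact Or.inl ⟨hx1, h⟩
      rw [this, two_compl_card a b hab]
    · have : (univ.filter fun y : Fin (d+1) => (x = a ∧ y ≠ a ∧ y ≠ b) ∨ (y = b ∧ x ≠ a ∧ x ≠ b))
          = {b} := by
        ext y; simp only [mem_filter, mem_univ, true_and, mem_singleton]
        constructor
        · rintro (⟨h, -⟩ | ⟨h, -⟩); exact absurd h hx1; exact h
        · intro h; exact Or.inr ⟨h, hx1, hx2⟩
      rw [this, Finset.card_singleton]
    · push_neg at hx2
      rw [Finset.card_eq_zero, Finset.filter_eq_empty_iff]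
      rintro y - (⟨h, -⟩ | ⟨-, -, h⟩)
      · exact hx1 h
      · exact h hx2
  rw [Finset.sum_congr rfl fun x _ => hsum x]
  rw [Finset.sum_ite, Finset.sum_const, Finset.filter_eq', if_pos (mem_univ a),
    Finset.card_singleton, one_smul]
  have : (univ.filter fun x : Fin (d+1) => ¬x = a) = univ.filter fun x => x ≠ a := rfl
  rw [this]
  rw [Finset.sum_ite, Finset.sum_const, Finset.sum_const_zero, add_zero, smul_eq_mul, mul_one]
  have hcard : ((univ.filter fun x : Fin (d+1) => x ≠ a).filter fun x => x ≠ b).card = d - 1 := by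
    rw [Finset.filter_filter]
    exact two_compl_card a b hab
  rw [hcard]
  omega

lemma countTot : (univ.filter (fun v : Fin 2 → Fin (d + 1) => v 0 ≠ v 1)).card = d ^ 2 + d := by
  rw [card_fun_pair (fun x y => x ≠ y), card_pair_sum (fun x y => x ≠ y)]
  have hsum : ∀ x : Fin (d + 1), (univ.filter fun y => x ≠ y).card = d := by
    intro x
    have : (univ.filter fun y : Fin (d+1) => x ≠ y) = univ.erase x := by
      ext y; simp [eq_comm]
    rw [this, Finset.card_erase_of_mem (mem_univ x)]
    simp
  rw [Finset.sum_congr rfl fun x _ => hsum x, Finset.sum_const, smul_eq_mul]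
  simp; ring

/-- In `sK(d,2)` with `d ≥ 3`, from any fixed vertex the numbers of vertices at
distance `0,1,2,3,4` are `1, d−1, (d−1)², 2(d−1), 1`, summing to `d² + d`, the total
number of vertices; every vertex is within distance `4` (so the diameter is `4`) and
there is a unique vertex at maximum distance `4`. -/
theorem stmt17 (d : ℕ) (hd : 3 ≤ d)
    (u : Fin 2 → Fin (d + 1)) (hu : sk2Vert u) :
    {v : Fin 2 → Fin (d + 1) | sk2Vert v ∧ sk2DistEq u v 0}.ncard = 1 ∧
    {v : Fin 2 → Fin (d + 1) | sk2Vert v ∧ sk2DistEq u v 1}.ncard = d - 1 ∧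
    {v : Fin 2 → Fin (d + 1) | sk2Vert v ∧ sk2DistEq u v 2}.ncard = (d - 1) ^ 2 ∧
    {v : Fin 2 → Fin (d + 1) | sk2Vert v ∧ sk2DistEq u v 3}.ncard = 2 * (d - 1) ∧
    {v : Fin 2 → Fin (d + 1) | sk2Vert v ∧ sk2DistEq u v 4}.ncard = 1 ∧
    1 + (d - 1) + (d - 1) ^ 2 + 2 * (d - 1) + 1 = d ^ 2 + d ∧
    {v : Fin 2 → Fin (d + 1) | sk2Vert v}.ncard = d ^ 2 + d ∧
    (∀ v : Fin 2 → Fin (d + 1), sk2Vert v → ∃ k ≤ 4, sk2Walk k u v) ∧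
    ∃! v : Fin 2 → Fin (d + 1), sk2Vert v ∧ sk2DistEq u v 4 := by
  have hn : 4 ≤ d + 1 := by omega
  -- set equalities
  have hset0 : {v : Fin 2 → Fin (d + 1) | sk2Vert v ∧ sk2DistEq u v 0} = {u} := by
    ext v
    simp only [Set.mem_setOf_eq, Set.mem_singleton_iff]
    constructor
    · rintro ⟨-, h, -⟩; exact walk0_prop h
    · rintro rfl; exact ⟨hu, mkwalk0 hu, fun k hk => by omega⟩
  have hset1 : {v : Fin 2 → Fin (d + 1) | sk2Vert v ∧ sk2DistEq u v 1}
      = {v | v 0 = u 1 ∧ v 1 ≠ u 0 ∧ v 1 ≠ u 1} := by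
    ext v
    simp only [Set.mem_setOf_eq]
    constructor
    · rintro ⟨-, h, -⟩; exact walk1_prop h
    · rintro ⟨h1, h2, h3⟩
      have hv : sk2Vert v := by show v 0 ≠ v 1; rw [h1]; exact fun h => h3 h.symm
      refine ⟨hv, mkwalk1 hu h1 h2 h3, ?_⟩
      intro k hk
      interval_cases k
      intro hw
      have hvu := walk0_prop hw
      rw [hvu] at h1
      exact hu h1
  have hset2 : {v : Fin 2 → Fin (d + 1) | sk2Vert v ∧ sk2DistEq u v 2}
      = {v | v 0 ≠ u 0 ∧ v 0 ≠ u 1 ∧ v 1 ≠ u 1 ∧ v 0 ≠ v 1} := by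
    ext v
    simp only [Set.mem_setOf_eq]
    constructor
    · rintro ⟨hv, h, -⟩
      obtain ⟨h1, h2, h3⟩ := walk2_prop h
      exact ⟨h1, h2, h3, hv⟩
    · rintro ⟨h1, h2, h3, h4⟩
      refine ⟨h4, mkwalk2 hu h1 h2 h3 h4, ?_⟩
      intro k hk
      interval_cases k
      · intro hw
        have hvu := walk0_prop hw
        rw [hvu] at h1
        exact h1 rfl
      · intro hw
        exact h2 (walk1_prop hw).1
  have hset3 : {v : Fin 2 → Fin (d + 1) | sk2Vert v ∧ sk2DistEq u v 3}
      = {v | (v 0 = u 0 ∧ v 1 ≠ u 0 ∧ v 1 ≠ u 1) ∨ (v 1 = u 1 ∧ v 0 ≠ u 0 ∧ v 0 ≠ u 1)} := by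
    ext v
    simp only [Set.mem_setOf_eq]
    constructor
    · rintro ⟨hv, hw, hlt⟩
      have hvb : v 0 ≠ u 1 := walk3_prop hw
      by_cases hva : v 0 = u 0
      · left
        refine ⟨hva, fun h => hv (by rw [hva, h]), ?_⟩
        intro h1
        have hvu : v = u := by rw [← fin2_eta v, hva, h1, fin2_eta]
        exact hlt 0 (by omega) (by rw [hvu]; exact mkwalk0 hu)
      · right
        refine ⟨?_, hva, hvb⟩
        by_contra h1
        exact hlt 2 (by omega) (mkwalk2 hu hva hvb h1 hv)
    · rintro (⟨h1, h2, h3⟩ | ⟨h1, h2, h3⟩)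
      · have hv : sk2Vert v := by
          show v 0 ≠ v 1; rw [h1]; exact fun h => h2 h.symm
        refine ⟨hv, mkwalk3a hn hu h1 h2 h3, ?_⟩
        intro k hk
        interval_cases k
        · intro hw
          have hvu := walk0_prop hw
          rw [hvu] at h3
          exact h3 rfl
        · intro hw
          have := (walk1_prop hw).1
          rw [h1] at this
          exact hu this
        · intro hw
          exact (walk2_prop hw).1 h1
      · have hv : sk2Vert v := by
          show v 0 ≠ v 1; rw [h1]; exact h3
        refine ⟨hv, mkwalk3b hn hu h1 h2 h3, ?_⟩
        intro k hk
        interval_cases k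
        · intro hw
          have hvu := walk0_prop hw
          rw [hvu] at h2
          exact h2 rfl
        · intro hw
          exact h3 (walk1_prop hw).1
        · intro hw
          exact (walk2_prop hw).2.2 h1
  have hset4 : {v : Fin 2 → Fin (d + 1) | sk2Vert v ∧ sk2DistEq u v 4}
      = {![u 1, u 0]} := by
    ext v
    simp only [Set.mem_setOf_eq, Set.mem_singleton_iff]
    constructor
    · rintro ⟨hv, hw, hlt⟩
      by_cases hva : v 0 = u 0
      · by_cases hv1 : v 1 = u 1
        · exfalso
          have hvu : v = u := by rw [← fin2_eta v, hva, hv1, fin2_eta]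
          exact hlt 0 (by omega) (by rw [hvu]; exact mkwalk0 hu)
        · exfalso
          exact hlt 3 (by omega)
            (mkwalk3a hn hu hva (fun h => hv (by rw [hva, h])) hv1)
      · by_cases hvb : v 0 = u 1
        · by_cases hv1 : v 1 = u 0
          · rw [← fin2_eta v, hvb, hv1]
          · exfalso
            exact hlt 1 (by omega)
              (mkwalk1 hu hvb hv1 (fun h => hv (by rw [hvb, h])))
        · by_cases hv1 : v 1 = u 1
          · exact absurd (hlt 3 (by omega)) (not_not.mpr (mkwalk3b hn hu hv1 hva hvb))
          · exact absurd (hlt 2 (by omega)) (not_not.mpr (mkwalk2 hu hva hvb hv1 hv))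
    · rintro rfl
      have hv : sk2Vert (![u 1, u 0] : Fin 2 → Fin (d + 1)) := Ne.symm hu
      refine ⟨hv, mkwalk4 hn hu, ?_⟩
      intro k hk
      interval_cases k
      · intro hw
        have := congrFun (walk0_prop hw) 0
        exact hu this.symm
      · intro hw
        exact (walk1_prop hw).2.1 rfl
      · intro hw
        exact (walk2_prop hw).2.1 rfl
      · intro hw
        exact walk3_prop hw rfl
  refine ⟨?_, ?_, ?_, ?_, ?_, ?_, ?_, ?_, ?_⟩
  · rw [hset0]; exact Set.ncard_singleton u
  · rw [hset1, ncard_setOf]; exact countS1 (u 0) (u 1) hu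
  · rw [hset2, ncard_setOf]; exact countS2 (u 0) (u 1) hu
  · rw [hset3, ncard_setOf]; exact countS3 (u 0) (u 1) hu
  · rw [hset4]; exact Set.ncard_singleton _
  · obtain ⟨e, rfl⟩ : ∃ e, d = e + 3 := ⟨d - 3, by omega⟩
    rw [show e + 3 - 1 = e + 2 from rfl]
    ring
  · have : {v : Fin 2 → Fin (d + 1) | sk2Vert v} = {v | v 0 ≠ v 1} := rfl
    rw [this, ncard_setOf]
    exact countTot
  · intro v hv
    by_cases hva : v 0 = u 0
    · by_cases hv1 : v 1 = u 1
      · have hvu : v = u := by rw [← fin2_eta v, hva, hv1, fin2_eta]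
        exact ⟨0, by omega, by rw [hvu]; exact mkwalk0 hu⟩
      · exact ⟨3, by omega, mkwalk3a hn hu hva (fun h => hv (by rw [hva, h])) hv1⟩
    · by_cases hvb : v 0 = u 1
      · by_cases hv1 : v 1 = u 0
        · have : v = ![u 1, u 0] := by rw [← fin2_eta v, hvb, hv1]
          exact ⟨4, by omega, this ▸ mkwalk4 hn hu⟩
        · exact ⟨1, by omega, mkwalk1 hu hvb hv1 (fun h => hv (by rw [hvb, h]))⟩
      · by_cases hv1 : v 1 = u 1
        · exact ⟨3, by omega, mkwalk3b hn hu hv1 hva hvb⟩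
        · exact ⟨2, by omega, mkwalk2 hu hva hvb hv1 hv⟩
  · refine ⟨![u 1, u 0], ?_, ?_⟩
    · have : (![u 1, u 0] : Fin 2 → Fin (d + 1)) ∈
        {v : Fin 2 → Fin (d + 1) | sk2Vert v ∧ sk2DistEq u v 4} := by
        rw [hset4]; rfl
      exact this
    · intro y hy
      have : y ∈ {v : Fin 2 → Fin (d + 1) | sk2Vert v ∧ sk2DistEq u v 4} := hy
      rw [hset4] at this
      exact this
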